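/- arXiv:2109.11760 — 2 statements merged into one kernel-verified Lean document; each statement's English description precedes it below -/
import Mathlib

section
/- Let M be the L*-structure built from a tree plan Γ, a countably infinite set S, and for each σ ∈ I(Γ) an ℵ₀-categorical, algebraically trivial, quantifier-eliminating theory T_σ with exactly one 1-type, via the construction identifying each component with a fixed countable model N_σ of T_σ. Then for any finite tree-closed A ⊆ Γ(S) and distinct e, e' ∈ Γ(S), if tp_Γ(e/A) = tp_Γ(e'/A) and, letting b ≤ e and b' ≤ e' be such that pred(b) = e ⊓ e' = pred(b'), tp^{M(b)}(b/A∩M(b)) = tp^{M(b)}(b'/A∩M(b)), then there is an automorphism g ∈ Aut(M/A) with g(e) = e'. -/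
namespace TreePlanDef

/-- Nodes of `Γ(X)` live among finite sequences of pairs `(i, t)` with `i : ℕ` and
`t : Option S` (`none` plays the role of `⋆`, `some x` an element of `X ⊆ S`). -/
abbrev PreNode (S : Type*) := List (ℕ × Option S)

/-- The projection `π` onto the first coordinates. -/
def proj {S : Type*} (a : PreNode S) : List ℕ := a.map Prod.fst

/-- Membership in `Γ(X)`: the projection is a node of `Γ`, and for each `k`, the second
coordinate of the `k`-th entry is `⋆ = none` if `λ` of the corresponding initial segment
is `1` (`lam = false`) and an element of `X` if it is `∞` (`lam = true`). -/
def memGamma {S : Type*} (Γ : Finset (List ℕ)) (lam : List ℕ → Bool) (X : Set S)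
    (a : PreNode S) : Prop :=
  proj a ∈ Γ ∧
    ∀ (k : ℕ) (h : k < a.length),
      (lam (proj (a.take (k + 1))) = false → (a.get ⟨k, h⟩).2 = none) ∧
      (lam (proj (a.take (k + 1))) = true → ∃ x ∈ X, (a.get ⟨k, h⟩).2 = some x)

open Classical in
/-- The meet (longest common prefix) of two nodes. -/
noncomputable def meet {S : Type*} : PreNode S → PreNode S → PreNode S
  | [], _ => []
  | _, [] => []
  | (x :: xs), (y :: ys) => if x = y then x :: meet xs ys else []

end TreePlanDef


namespace TreePlanDef

variable {S : Type*}

/-- The stages of the tree-closure operator on subsets of `Γ(X)`. -/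
def tclN (Γ : Finset (List ℕ)) (lam : List ℕ → Bool) (X : Set S) :
    ℕ → Set (PreNode S) → Set (PreNode S)
  | 0, B => {([] : PreNode S)} ∪ {a : PreNode S | ∃ b ∈ B, a <+: b}
  | n + 1, B => tclN Γ lam X n B ∪
      {a : PreNode S | memGamma Γ lam X a ∧ lam (proj a) = false ∧
        a.dropLast ∈ tclN Γ lam X n B}

/-- The tree-closure `tcl(B) = ⋃ₙ tclₙ(B)`. -/
def tclSet (Γ : Finset (List ℕ)) (lam : List ℕ → Bool) (X : Set S)
    (B : Set (PreNode S)) : Set (PreNode S) :=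
  ⋃ n, tclN Γ lam X n B

/-- The universe of the tree `Γ(S)` (every label from `S` allowed: `X = univ`). -/
def NodeSet (Γ : Finset (List ℕ)) (lam : List ℕ → Bool) (S : Type*) :
    Set (PreNode S) :=
  {a : PreNode S | memGamma Γ lam (Set.univ : Set S) a}

/-- A permutation of finite sequences is a tree automorphism of `Γ(S)` if it preserves
the universe `Γ(S)` (in both directions), the projection `π`, and the predecessor
function; this characterizes automorphisms of the tree structure `Γ(S)`. -/
def IsTreeAuto (Γ : Finset (List ℕ)) (lam : List ℕ → Bool)
    (g : Equiv.Perm (PreNode S)) : Prop :=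
  (∀ a ∈ NodeSet Γ lam S, g a ∈ NodeSet Γ lam S) ∧
  (∀ a ∈ NodeSet Γ lam S, g⁻¹ a ∈ NodeSet Γ lam S) ∧
  (∀ a ∈ NodeSet Γ lam S, proj (g a) = proj a) ∧
  (∀ a ∈ NodeSet Γ lam S, g a.dropLast = (g a).dropLast)

/-- The component `M(e) = {x : pred x = pred e ∧ π x = π e}`. -/
def Mc (Γ : Finset (List ℕ)) (lam : List ℕ → Bool) (e : PreNode S) :
    Set (PreNode S) :=
  {x ∈ NodeSet Γ lam S | x.dropLast = e.dropLast ∧ proj x = proj e}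

end TreePlanDef

open TreePlanDef List

namespace TreePlanDef

variable {S : Type*}

/-- Compatibility of a permutation of `Γ(S)` with the component structures: on each
infinite component (children of `b` along an infinity node `(proj b) ++ [k]`), the map
induced on the labels in `S` agrees on every finite set with some automorphism
`hh ∈ H ((proj b) ++ [k])` of the component model `N_σ` (whose universe is identified
with `S` via the fixed bijection `f_σ`).  Together with being a tree automorphism this
characterizes membership in `Aut(M)` for the constructed structure `M`. -/
def Compat (Γ : Finset (List ℕ)) (lam : List ℕ → Bool)
    (H : List ℕ → Set (Equiv.Perm S)) (g : Equiv.Perm (PreNode S)) : Prop :=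
  ∀ b ∈ NodeSet Γ lam S, ∀ k : ℕ, proj b ++ [k] ∈ Γ → lam (proj b ++ [k]) = true →
    ∀ F : Finset S, ∃ hh ∈ H (proj b ++ [k]), ∀ t ∈ F,
      g (b ++ [(k, some t)]) = g b ++ [(k, some (hh t))]

/-- The automorphism group of the constructed structure `M`. -/
def AutM (Γ : Finset (List ℕ)) (lam : List ℕ → Bool)
    (H : List ℕ → Set (Equiv.Perm S)) : Set (Equiv.Perm (PreNode S)) :=
  {g : Equiv.Perm (PreNode S) |
    IsTreeAuto Γ lam g ∧ Compat Γ lam H g ∧ Compat Γ lam H g⁻¹}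

end TreePlanDef


namespace TreePlanAux
open TreePlanDef List

variable {S : Type*}

lemma length_proj (a : PreNode S) : (proj a).length = a.length := List.length_map _

lemma proj_append (a b : PreNode S) : proj (a ++ b) = proj a ++ proj b :=
  List.map_append

lemma proj_take (a : PreNode S) (n : ℕ) : proj (a.take n) = (proj a).take n :=
  List.map_take

lemma drop_middle (p r : PreNode S) (x : ℕ × Option S) :
    (p ++ [x] ++ r).drop (p.length + 1) = r := by
  have := List.drop_left (l₁ := p ++ [x]) (l₂ := r)
  simpa using this

lemma prefix_decomp {p a : PreNode S} {x : ℕ × Option S} (h : p ++ [x] <+: a) :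
    a = p ++ [x] ++ a.drop (p.length + 1) := by
  obtain ⟨u, hu⟩ := h
  have h2 : a.drop (p.length + 1) = u := by
    rw [← hu]
    have := List.drop_left (l₁ := p ++ [x]) (l₂ := u)
    simpa using this
  rw [h2, ← hu]

lemma getElem_middle (p r : PreNode S) (x : ℕ × Option S) :
    (p ++ [x] ++ r)[p.length]'(by simp) = x := by
  rw [List.getElem_append_left (by simp), List.getElem_append_right le_rfl]
  simp

lemma getElem_middle_ne (p r : PreNode S) (x y : ℕ × Option S) {j : ℕ}
    (hj : j < (p ++ [x] ++ r).length) (hne : j ≠ p.length) :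
    (p ++ [x] ++ r)[j]'hj = (p ++ [y] ++ r)[j]'(by simpa using hj) := by
  rcases lt_or_gt_of_ne hne with h | h
  · rw [List.getElem_append_left (by simp; omega), List.getElem_append_left h,
      List.getElem_append_left (by simp; omega), List.getElem_append_left h]
  · rw [List.getElem_append_right (by simp; omega), List.getElem_append_right (by simp; omega)]
    simp

lemma witness_unique {p a : PreNode S} {k : ℕ} {t t' : S}
    (h : p ++ [(k, some t)] <+: a) (h' : p ++ [(k, some t')] <+: a) : t = t' := by
  have h2 := (List.prefix_of_prefix_length_le h h' (by simp)).eq_of_length (by simp)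
  have h3 := List.append_cancel_left h2
  simpa using h3

open Classical in
noncomputable def substFun (p : PreNode S) (k : ℕ) (hh : Equiv.Perm S)
    (a : PreNode S) : PreNode S :=
  if h : ∃ t : S, p ++ [(k, some t)] <+: a then
    p ++ [(k, some (hh h.choose))] ++ a.drop (p.length + 1)
  else a

lemma substFun_of_prefix {p a : PreNode S} {k : ℕ} {t : S}
    (ht : p ++ [(k, some t)] <+: a) (hh : Equiv.Perm S) :
    substFun p k hh a = p ++ [(k, some (hh t))] ++ a.drop (p.length + 1) := by
  rw [substFun, dif_pos ⟨t, ht⟩]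
  have hch := (⟨t, ht⟩ : ∃ t : S, p ++ [(k, some t)] <+: a).choose_spec
  rw [witness_unique hch ht]

lemma substFun_of_not {p a : PreNode S} {k : ℕ} {hh : Equiv.Perm S}
    (h : ¬ ∃ t : S, p ++ [(k, some t)] <+: a) : substFun p k hh a = a := dif_neg h

lemma substFun_of_short {p a : PreNode S} {k : ℕ} {hh : Equiv.Perm S}
    (h : a.length ≤ p.length) : substFun p k hh a = a := by
  apply substFun_of_not
  rintro ⟨t, ht⟩
  have := ht.length_le
  simp at this; omega

lemma substFun_substFun (p : PreNode S) (k : ℕ) (hh : Equiv.Perm S) (a : PreNode S) :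
    substFun p k hh⁻¹ (substFun p k hh a) = a := by
  by_cases h : ∃ t : S, p ++ [(k, some t)] <+: a
  · obtain ⟨t, ht⟩ := h
    rw [substFun_of_prefix ht]
    rw [substFun_of_prefix (List.prefix_append (p ++ [(k, some (hh t))]) (a.drop (p.length+1))), drop_middle]
    simp only [Equiv.Perm.coe_inv, Equiv.symm_apply_apply]
    exact (prefix_decomp ht).symm
  · rw [substFun_of_not h, substFun_of_not h]

noncomputable def substPerm (p : PreNode S) (k : ℕ) (hh : Equiv.Perm S) :
    Equiv.Perm (PreNode S) where
  toFun := substFun p k hh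
  invFun := substFun p k hh⁻¹
  left_inv a := substFun_substFun p k hh a
  right_inv a := by
    have := substFun_substFun p k hh⁻¹ a
    rwa [inv_inv] at this

lemma substPerm_apply (p : PreNode S) (k : ℕ) (hh : Equiv.Perm S) (a : PreNode S) :
    substPerm p k hh a = substFun p k hh a := rfl

lemma substPerm_inv (p : PreNode S) (k : ℕ) (hh : Equiv.Perm S) :
    (substPerm p k hh)⁻¹ = substPerm p k hh⁻¹ :=
  Equiv.ext fun _ => rfl

lemma proj_substFun (p : PreNode S) (k : ℕ) (hh : Equiv.Perm S) (a : PreNode S) :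
    proj (substFun p k hh a) = proj a := by
  by_cases h : ∃ t : S, p ++ [(k, some t)] <+: a
  · obtain ⟨t, ht⟩ := h
    rw [substFun_of_prefix ht]
    conv_rhs => rw [prefix_decomp ht]
    simp [proj]
  · rw [substFun_of_not h]

lemma substFun_dropLast (p : PreNode S) (k : ℕ) (hh : Equiv.Perm S) (a : PreNode S) :
    substFun p k hh a.dropLast = (substFun p k hh a).dropLast := by
  by_cases h : ∃ t : S, p ++ [(k, some t)] <+: a
  · obtain ⟨t, ht⟩ := h
    rw [substFun_of_prefix ht]
    by_cases hr : a.drop (p.length + 1) = []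
    · have ha : a = p ++ [(k, some t)] := by
        conv_lhs => rw [prefix_decomp ht]
        rw [hr, List.append_nil]
      rw [hr, List.append_nil, List.dropLast_concat, ha, List.dropLast_concat]
      exact substFun_of_short le_rfl
    · have hd : a.dropLast = p ++ [(k, some t)] ++ (a.drop (p.length + 1)).dropLast := by
        conv_lhs => rw [prefix_decomp ht]
        exact List.dropLast_append_of_ne_nil hr
      rw [hd, substFun_of_prefix (List.prefix_append _ _), drop_middle,
        List.dropLast_append_of_ne_nil hr]
  · rw [substFun_of_not h, substFun_of_not (fun ⟨t, ht⟩ => h ⟨t, ht.trans (List.dropLast_prefix a)⟩)]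

lemma substFun_mem_NodeSet {Γ : Finset (List ℕ)} {lam : List ℕ → Bool}
    {p a : PreNode S} {k : ℕ} {hh : Equiv.Perm S}
    (ha : a ∈ NodeSet Γ lam S) : substFun p k hh a ∈ NodeSet Γ lam S := by
  by_cases h : ∃ t : S, p ++ [(k, some t)] <+: a
  · obtain ⟨t, ht⟩ := h
    have hdecomp := prefix_decomp ht
    rw [substFun_of_prefix ht]
    have hproj : proj (p ++ [(k, some (hh t))] ++ a.drop (p.length + 1)) = proj a := by
      conv_rhs => rw [hdecomp]
      simp [proj]
    constructor
    · rw [hproj]; exact ha.1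
    · intro j hj
      have hlen : (p ++ [(k, some (hh t))] ++ a.drop (p.length + 1)).length = a.length := by
        conv_rhs => rw [hdecomp]
        simp
      have hja : j < a.length := by rwa [hlen] at hj
      have hlam : ∀ n, lam (proj ((p ++ [(k, some (hh t))] ++ a.drop (p.length + 1)).take n))
          = lam (proj (a.take n)) := by
        intro n
        rw [proj_take, proj_take, hproj]
      have hgeta := ha.2 j hja
      simp only [List.get_eq_getElem] at hgeta ⊢
      rw [hlam]
      by_cases hje : j = p.length
      · subst hje
        rw [getElem_middle]
        have hat : a[p.length]'hja = (k, some t) := by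
          rw [List.getElem_of_eq hdecomp hja, getElem_middle]
        constructor
        · intro hfalse
          have := hgeta.1 hfalse
          rw [hat] at this
          simp at this
        · intro _
          exact ⟨hh t, Set.mem_univ _, rfl⟩
      · have hentry : (p ++ [(k, some (hh t))] ++ a.drop (p.length + 1))[j]'hj
            = a[j]'hja :=
          (getElem_middle_ne _ _ _ (k, some t) hj hje).trans
            (List.getElem_of_eq hdecomp hja).symm
        rw [hentry]
        exact hgeta
  · rwa [substFun_of_not h]

lemma drop_append_le {α : Type*} {n : ℕ} {l l' : List α} (h : n ≤ l.length) :
    (l ++ l').drop n = l.drop n ++ l' := by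
  rw [List.drop_append, Nat.sub_eq_zero_of_le h, List.drop_zero]

variable {Γ : Finset (List ℕ)} {lam : List ℕ → Bool} {H : List ℕ → Set (Equiv.Perm S)}

lemma substPerm_isTreeAuto (p : PreNode S) (k : ℕ) (hh : Equiv.Perm S) :
    IsTreeAuto Γ lam (substPerm p k hh) :=
  ⟨fun _ ha => substFun_mem_NodeSet ha,
   fun _ ha => substFun_mem_NodeSet ha,
   fun a _ => proj_substFun p k hh a,
   fun a _ => substFun_dropLast p k hh a⟩

lemma substPerm_compat (p : PreNode S) (k : ℕ) (hh : Equiv.Perm S)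
    (hmem : hh ∈ H (proj p ++ [k])) (hone : ∀ σ, (1 : Equiv.Perm S) ∈ H σ) :
    Compat Γ lam H (substPerm p k hh) := by
  intro b₀ hb₀ k₀ hΓ hlam F
  by_cases hcase : b₀ = p ∧ k₀ = k
  · obtain ⟨rfl, rfl⟩ := hcase
    refine ⟨hh, hmem, fun t _ => ?_⟩
    rw [substPerm_apply, substPerm_apply, substFun_of_short le_rfl,
      substFun_of_prefix (List.prefix_refl _) hh]
    have : (b₀ ++ [(k₀, some t)]).drop (b₀.length + 1) = [] := by
      apply List.drop_eq_nil_of_le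
      simp
    rw [this, List.append_nil]
  · refine ⟨1, hone _, fun t _ => ?_⟩
    simp only [Equiv.Perm.coe_one, id_eq]
    rw [substPerm_apply, substPerm_apply]
    by_cases h : ∃ t' : S, p ++ [(k, some t')] <+: b₀
    · obtain ⟨t', ht'⟩ := h
      have hlen : p.length + 1 ≤ b₀.length := by
        have := ht'.length_le; simp at this; omega
      rw [substFun_of_prefix ht' hh,
        substFun_of_prefix (ht'.trans (List.prefix_append b₀ [(k₀, some t)])) hh,
        drop_append_le hlen, ← List.append_assoc]
    · have h2 : ¬ ∃ t' : S, p ++ [(k, some t')] <+: b₀ ++ [(k₀, some t)] := by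
        rintro ⟨t', ht'⟩
        have hlen : p.length + 1 ≤ b₀.length + 1 := by
          have := ht'.length_le; simp at this; omega
        rcases lt_or_eq_of_le hlen with hlt | heq
        · exact h ⟨t', List.prefix_of_prefix_length_le ht'
            (List.prefix_append b₀ [(k₀, some t)]) (by simp; omega)⟩
        · have heq2 : p ++ [(k, some t')] = b₀ ++ [(k₀, some t)] :=
            ht'.eq_of_length (by simp; omega)
          obtain ⟨h3, h4⟩ := List.append_inj heq2 (by omega)
          simp at h4
          exact hcase ⟨h3.symm, h4.1.symm⟩
      rw [substFun_of_not h, substFun_of_not h2]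

lemma substPerm_mem_AutM (p : PreNode S) (k : ℕ) (hh : Equiv.Perm S)
    (hmem : hh ∈ H (proj p ++ [k])) (hone : ∀ σ, (1 : Equiv.Perm S) ∈ H σ)
    (hinv : ∀ σ, ∀ h₁ ∈ H σ, h₁⁻¹ ∈ H σ) :
    substPerm p k hh ∈ AutM Γ lam H :=
  ⟨substPerm_isTreeAuto p k hh, substPerm_compat p k hh hmem hone, by
    rw [substPerm_inv]
    exact substPerm_compat p k hh⁻¹ (hinv _ _ hmem) hone⟩

lemma substPerm_fix {A : Set (PreNode S)} {p : PreNode S} {k : ℕ} {hh : Equiv.Perm S}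
    (hApre : ∀ {c a : PreNode S}, a ∈ A → c <+: a → c ∈ A)
    (hfix : ∀ t : S, p ++ [(k, some t)] ∈ A → hh t = t) :
    ∀ a ∈ A, substPerm p k hh a = a := by
  intro a ha
  rw [substPerm_apply]
  by_cases h : ∃ t : S, p ++ [(k, some t)] <+: a
  · obtain ⟨t, ht⟩ := h
    rw [substFun_of_prefix ht, hfix t (hApre ha ht)]
    exact (prefix_decomp ht).symm
  · exact substFun_of_not h

lemma isTreeAuto_one : IsTreeAuto Γ lam (1 : Equiv.Perm (PreNode S)) :=
  ⟨fun _ ha => ha, fun _ ha => by simpa using ha, fun _ _ => rfl, fun _ _ => rfl⟩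

lemma compat_one (hone : ∀ σ, (1 : Equiv.Perm S) ∈ H σ) :
    Compat Γ lam H (1 : Equiv.Perm (PreNode S)) :=
  fun _ _ _ _ _ _ => ⟨1, hone _, fun _ _ => rfl⟩

lemma one_mem_AutM (hone : ∀ σ, (1 : Equiv.Perm S) ∈ H σ) :
    (1 : Equiv.Perm (PreNode S)) ∈ AutM Γ lam H :=
  ⟨isTreeAuto_one, compat_one hone, by simpa using compat_one (Γ := Γ) (lam := lam) hone⟩

lemma isTreeAuto_inv {g : Equiv.Perm (PreNode S)} (h : IsTreeAuto Γ lam g) :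
    IsTreeAuto Γ lam g⁻¹ := by
  obtain ⟨h1, h2, h3, h4⟩ := h
  refine ⟨h2, fun a ha => by simpa using h1 a ha, ?_, ?_⟩
  · intro a ha
    have := h3 (g⁻¹ a) (h2 a ha)
    rw [Equiv.Perm.coe_inv, Equiv.apply_symm_apply] at this
    exact this.symm
  · intro a ha
    have := h4 (g⁻¹ a) (h2 a ha)
    rw [Equiv.Perm.coe_inv, Equiv.apply_symm_apply] at this
    rw [← this, Equiv.Perm.coe_inv, Equiv.symm_apply_apply]

lemma isTreeAuto_mul {f g : Equiv.Perm (PreNode S)} (hf : IsTreeAuto Γ lam f)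
    (hg : IsTreeAuto Γ lam g) : IsTreeAuto Γ lam (f * g) := by
  refine ⟨fun a ha => hf.1 _ (hg.1 a ha), ?_, ?_, ?_⟩
  · intro a ha
    rw [mul_inv_rev]
    exact hg.2.1 _ (hf.2.1 a ha)
  · intro a ha
    show proj (f (g a)) = proj a
    rw [hf.2.2.1 _ (hg.1 a ha), hg.2.2.1 a ha]
  · intro a ha
    show f (g a.dropLast) = (f (g a)).dropLast
    rw [hg.2.2.2 a ha, hf.2.2.2 _ (hg.1 a ha)]

lemma compat_mul {f g : Equiv.Perm (PreNode S)}
    (hHmul : ∀ σ, ∀ h₁ ∈ H σ, ∀ h₂ ∈ H σ, h₁ * h₂ ∈ H σ)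
    (hf : Compat Γ lam H f) (hg : Compat Γ lam H g) (hgauto : IsTreeAuto Γ lam g) :
    Compat Γ lam H (f * g) := by
  classical
  intro b hb k hΓ hl F
  obtain ⟨hg1, hg1m, hg1e⟩ := hg b hb k hΓ hl F
  have hb' : g b ∈ NodeSet Γ lam S := hgauto.1 b hb
  have hpb : proj (g b) = proj b := hgauto.2.2.1 b hb
  obtain ⟨hf1, hf1m, hf1e⟩ := hf (g b) hb' k (by rwa [hpb]) (by rwa [hpb]) (F.image hg1)
  refine ⟨hf1 * hg1, hHmul _ hf1 (by rwa [hpb] at hf1m) hg1 hg1m, fun t ht => ?_⟩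
  show f (g (b ++ [(k, some t)])) = f (g b) ++ [(k, some ((hf1 * hg1) t))]
  rw [hg1e t ht, hf1e (hg1 t) (Finset.mem_image_of_mem _ ht)]
  rfl

lemma mul_mem_AutM {f g : Equiv.Perm (PreNode S)}
    (hone : ∀ σ, (1 : Equiv.Perm S) ∈ H σ)
    (hHmul : ∀ σ, ∀ h₁ ∈ H σ, ∀ h₂ ∈ H σ, h₁ * h₂ ∈ H σ)
    (hf : f ∈ AutM Γ lam H) (hg : g ∈ AutM Γ lam H) : f * g ∈ AutM Γ lam H := by
  refine ⟨isTreeAuto_mul hf.1 hg.1, compat_mul hHmul hf.2.1 hg.2.1 hg.1, ?_⟩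
  rw [mul_inv_rev]
  exact compat_mul hHmul hg.2.2 hf.2.2 (isTreeAuto_inv hf.1)

lemma dropLast_iterate_eq_take {α : Type*} (l : List α) :
    ∀ n, List.dropLast^[n] l = l.take (l.length - n)
  | 0 => by simp
  | n + 1 => by
    rw [Function.iterate_succ_apply', dropLast_iterate_eq_take l n]
    rw [List.dropLast_eq_take, List.length_take, List.take_take]
    congr 1
    omega

lemma Gamma_take (hclosed : ∀ l ∈ Γ, l.dropLast ∈ Γ) {l : List ℕ} (hl : l ∈ Γ)
    (j : ℕ) : l.take j ∈ Γ := by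
  rcases le_or_gt l.length j with h | h
  · rwa [List.take_of_length_le h]
  · have hiter : ∀ n, List.dropLast^[n] l ∈ Γ := by
      intro n
      induction n with
      | zero => exact hl
      | succ n ih => rw [Function.iterate_succ_apply']; exact hclosed _ ih
    have := hiter (l.length - j)
    rwa [dropLast_iterate_eq_take, Nat.sub_sub_self h.le] at this

lemma NodeSet_take {a : PreNode S} (ha : a ∈ NodeSet Γ lam S)
    (hclosed : ∀ l ∈ Γ, l.dropLast ∈ Γ) (j : ℕ) : a.take j ∈ NodeSet Γ lam S := by
  constructor
  · rw [proj_take]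
    exact Gamma_take hclosed ha.1 j
  · intro i hi
    have hij : i < j := by simp at hi; omega
    have hia : i < a.length := by simp at hi; omega
    have htt : (a.take j).take (i + 1) = a.take (i + 1) := by
      rw [List.take_take]
      congr 1
      omega
    rw [htt]
    have := ha.2 i hia
    simp only [List.get_eq_getElem] at this ⊢
    rw [List.getElem_take]
    exact this

lemma NodeSet_dropLast {a : PreNode S} (ha : a ∈ NodeSet Γ lam S)
    (hclosed : ∀ l ∈ Γ, l.dropLast ∈ Γ) : a.dropLast ∈ NodeSet Γ lam S := by
  rw [List.dropLast_eq_take]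
  exact NodeSet_take ha hclosed _

lemma treeAuto_length {τ : Equiv.Perm (PreNode S)} (hτ : IsTreeAuto Γ lam τ)
    {a : PreNode S} (ha : a ∈ NodeSet Γ lam S) : (τ a).length = a.length := by
  rw [← length_proj, hτ.2.2.1 a ha, length_proj]

lemma treeAuto_dropLast_iter {τ : Equiv.Perm (PreNode S)} (hτ : IsTreeAuto Γ lam τ)
    (hclosed : ∀ l ∈ Γ, l.dropLast ∈ Γ) {a : PreNode S} (ha : a ∈ NodeSet Γ lam S) :
    ∀ n, τ (List.dropLast^[n] a) = List.dropLast^[n] (τ a) := by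
  intro n
  induction n with
  | zero => rfl
  | succ n ih =>
    have hmem : List.dropLast^[n] a ∈ NodeSet Γ lam S := by
      rw [dropLast_iterate_eq_take]
      exact NodeSet_take ha hclosed _
    rw [Function.iterate_succ_apply', Function.iterate_succ_apply',
      hτ.2.2.2 _ hmem, ih]

lemma treeAuto_take {τ : Equiv.Perm (PreNode S)} (hτ : IsTreeAuto Γ lam τ)
    (hclosed : ∀ l ∈ Γ, l.dropLast ∈ Γ) {a : PreNode S} (ha : a ∈ NodeSet Γ lam S)
    (j : ℕ) : τ (a.take j) = (τ a).take j := by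
  rcases le_or_gt a.length j with h | h
  · rw [List.take_of_length_le h, List.take_of_length_le (by rw [treeAuto_length hτ ha]; exact h)]
  · have h1 := treeAuto_dropLast_iter hτ hclosed ha (a.length - j)
    rw [dropLast_iterate_eq_take, dropLast_iterate_eq_take,
      treeAuto_length hτ ha, Nat.sub_sub_self h.le] at h1
    exact h1

lemma meet_not_common_ext :
    ∀ (x y : PreNode S) (z : ℕ × Option S),
      meet x y ++ [z] <+: x → meet x y ++ [z] <+: y → False
  | [], y, z, h1, _ => by
    have := h1.length_le; simp [meet] at this
  | a :: xs, [], z, _, h2 => by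
    have := h2.length_le; simp [meet] at this
  | a :: xs, b :: ys, z, h1, h2 => by
    by_cases hab : a = b
    · subst hab
      rw [show meet (a :: xs) (a :: ys) = a :: meet xs ys from by rw [meet, if_pos rfl]]
        at h1 h2
      rw [List.cons_append, List.cons_prefix_cons] at h1 h2
      exact meet_not_common_ext xs ys z h1.2 h2.2
    · rw [show meet (a :: xs) (b :: ys) = [] from by rw [meet, if_neg hab]] at h1 h2
      rw [List.nil_append] at h1 h2
      rw [show [z] = z :: ([] : PreNode S) from rfl, List.cons_prefix_cons] at h1 h2
      exact hab (h1.1.symm.trans h2.1)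

end TreePlanAux

open TreePlanAux

/-- key lemma for the constructed NIC structure.  `M` is the `L*`-structure
built from the tree plan `Γ`, the countably infinite set `S`, and for each infinity node
`σ ∈ I(Γ)` a countable model `N_σ` of an ℵ₀-categorical, algebraically trivial,
quantifier-eliminating theory `T_σ` with exactly one 1-type, whose universe is identified
with `S` via the fixed bijection `f_σ`.  Model-theoretically `N_σ` enters only through its
automorphism group, represented here by an oligomorphic, transitive, algebraically
trivial permutation group `H σ` on `S` (types in `N_σ` over finite sets = orbits of
`H σ`), and `Aut(M)` is the group `AutM` of tree automorphisms compatible with the `H σ`.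
Claim: for any finite tree-closed `A ⊆ Γ(S)` and distinct `e, e' ∈ Γ(S)`, if
`tp_Γ(e/A) = tp_Γ(e'/A)` (an `A`-fixing tree automorphism takes `e` to `e'`) and, letting
`b ≤ e`, `b' ≤ e'` with `pred b = e ⊓ e' = pred b'`, the component types
`tp^{M(b)}(b / A ∩ M(b))` and `tp^{M(b)}(b' / A ∩ M(b))` are equal (an `H`-automorphism
fixing the labels of `A ∩ M(b)` takes the label of `b` to that of `b'`), then there is an
automorphism `g ∈ Aut(M/A)` with `g e = e'`. -/
theorem construction_key_lemma
    {S : Type*} [Countable S] [Infinite S]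
    (Γ : Finset (List ℕ)) (lam : List ℕ → Bool)
    (hroot : ([] : List ℕ) ∈ Γ) (hclosed : ∀ l ∈ Γ, l.dropLast ∈ Γ)
    (hlamroot : lam [] = false)
    -- the component automorphism groups `H σ = Aut(N_σ)` (transported to `S` via `f_σ`)
    (H : List ℕ → Set (Equiv.Perm S))
    (hHone : ∀ σ, (1 : Equiv.Perm S) ∈ H σ)
    (hHmul : ∀ σ, ∀ h₁ ∈ H σ, ∀ h₂ ∈ H σ, h₁ * h₂ ∈ H σ)
    (hHinv : ∀ σ, ∀ h₁ ∈ H σ, h₁⁻¹ ∈ H σ)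
    -- `T_σ` is ℵ₀-categorical: `H σ` is oligomorphic
    (hHcat : ∀ σ ∈ Γ, lam σ = true → ∀ n : ℕ,
      {O : Set (Fin n → S) | ∃ s : Fin n → S,
        O = {t | ∃ hh ∈ H σ, ∀ i, hh (s i) = t i}}.Finite)
    -- `|S₁(T_σ)| = 1`: `H σ` is transitive
    (hHtrans : ∀ σ ∈ Γ, lam σ = true → ∀ s t : S, ∃ hh ∈ H σ, hh s = t)
    -- `T_σ` is algebraically trivial
    (hHtriv : ∀ σ ∈ Γ, lam σ = true → ∀ B : Finset S, ∀ s : S, s ∉ B →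
      {t : S | ∃ hh ∈ H σ, (∀ x ∈ B, hh x = x) ∧ hh s = t}.Infinite)
    -- the finite tree-closed parameter set
    (A : Set (PreNode S)) (hAfin : A.Finite) (hAsub : A ⊆ NodeSet Γ lam S)
    (hAclosed : tclSet Γ lam (Set.univ : Set S) A = A)
    -- the elements `e ≠ e'` and `b ≤ e`, `b' ≤ e'` just above the meet `e ⊓ e'`
    (e : PreNode S) (he : e ∈ NodeSet Γ lam S)
    (e' : PreNode S) (he' : e' ∈ NodeSet Γ lam S) (hne : e ≠ e')
    (b b' : PreNode S) (hb : b <+: e) (hb' : b' <+: e')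
    (hpredb : b.dropLast = meet e e') (hpredb' : b'.dropLast = meet e e')
    (k : ℕ) (s s' : S)
    (hbshape : b = meet e e' ++ [(k, some s)])
    (hb'shape : b' = meet e e' ++ [(k, some s')])
    -- `tp_Γ(e/A) = tp_Γ(e'/A)`
    (htreetype : ∃ τ : Equiv.Perm (PreNode S),
      IsTreeAuto Γ lam τ ∧ (∀ x ∈ A, τ x = x) ∧ τ e = e')
    -- `tp^{M(b)}(b / A ∩ M(b)) = tp^{M(b)}(b' / A ∩ M(b))`
    (hcomptype : ∃ hh ∈ H (proj b),
      (∀ t : S, (meet e e' ++ [(k, some t)]) ∈ A → hh t = t) ∧ hh s = s') :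
    ∃ g ∈ AutM Γ lam H, (∀ x ∈ A, g x = x) ∧ g e = e' := by
  
  classical
  obtain ⟨τ, hτauto, hτfix, hτe⟩ := htreetype
  obtain ⟨hh₀, hh₀mem, hh₀fix, hh₀s⟩ := hcomptype
  have hApre : ∀ {c a : PreNode S}, a ∈ A → c <+: a → c ∈ A := by
    intro c a ha hc
    rw [← hAclosed]
    exact Set.mem_iUnion.2 ⟨0, Or.inr ⟨a, ha, hc⟩⟩
  have hproj : proj e' = proj e := by rw [← hτe, hτauto.2.2.1 e he]
  have hlen : e'.length = e.length := by rw [← length_proj, hproj, length_proj]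
  set m := meet e e' with hm
  have hmb : m <+: b := by rw [hbshape]; exact List.prefix_append _ _
  have hmb' : m <+: b' := by rw [hb'shape]; exact List.prefix_append _ _
  have hme : m <+: e := hmb.trans hb
  have hme' : m <+: e' := hmb'.trans hb'
  have hblen : b.length = m.length + 1 := by rw [hbshape]; simp
  have hb'len : b'.length = m.length + 1 := by rw [hb'shape]; simp
  have hdlt : m.length + 1 ≤ e.length := by have := hb.length_le; omega
  have hdlt' : m.length + 1 ≤ e'.length := by have := hb'.length_le; omega
  have hbtake : e.take (m.length + 1) = b := by
    have h1 := List.prefix_iff_eq_take.1 hb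
    rw [hblen] at h1
    exact h1.symm
  have hb'take : e'.take (m.length + 1) = b' := by
    have h1 := List.prefix_iff_eq_take.1 hb'
    rw [hb'len] at h1
    exact h1.symm
  have hmtake : e.take m.length = m := (List.prefix_iff_eq_take.1 hme).symm
  have hmtake' : e'.take m.length = m := (List.prefix_iff_eq_take.1 hme').symm
  have hsne : s ≠ s' := by
    intro hss
    apply meet_not_common_ext e e' (k, some s)
    · rw [← hm, ← hbshape]; exact hb
    · rw [← hm, hss, ← hb'shape]; exact hb'
  have hmax : ∀ j, e.take j = e'.take j → j ≤ m.length := by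
    intro j hj
    by_contra hlt
    push_neg at hlt
    have h2 : e.take (m.length + 1) = (e.take j).take (m.length + 1) := by
      rw [List.take_take]
      congr 1
      omega
    have h3 : e'.take (m.length + 1) = (e'.take j).take (m.length + 1) := by
      rw [List.take_take]
      congr 1
      omega
    have h1 : e.take (m.length + 1) = e'.take (m.length + 1) := by rw [h2, h3, hj]
    rw [hbtake, hb'take, hbshape, hb'shape] at h1
    exact hsne (by simpa using h1)
  have hproj_take : ∀ j, proj (e'.take j) = proj (e.take j) := fun j => by
    rw [proj_take, proj_take, hproj]
  have key : ∀ n, m.length ≤ n → n ≤ e.length →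
      ∃ g ∈ AutM Γ lam H, (∀ x ∈ A, g x = x) ∧ g e = e'.take n ++ e.drop n := by
    intro n hn
    induction n, hn using Nat.le_induction with
    | base =>
      intro _
      refine ⟨1, one_mem_AutM hHone, fun x _ => rfl, ?_⟩
      show e = e'.take m.length ++ e.drop m.length
      rw [hmtake'.trans hmtake.symm]
      exact (List.take_append_drop _ _).symm
    | succ n hdn ih =>
      intro hn1
      obtain ⟨g, hg, hgA, hge⟩ := ih (by omega)
      have hne2 : n < e.length := by omega
      have hne2' : n < e'.length := by omega
      have hfst : (e[n]'hne2).1 = (e'[n]'hne2').1 := by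
        have h1 := List.getElem_of_eq hproj.symm
          (show n < (proj e).length by rw [length_proj]; exact hne2)
        simp only [proj, List.getElem_map] at h1
        exact h1
      by_cases hlam2 : lam (proj (e.take (n + 1))) = true
      · -- infinity node case
        have hlam2' : lam (proj (e'.take (n + 1))) = true := by
          rw [hproj_take]; exact hlam2
        obtain ⟨u, -, hu⟩ := (he.2 n hne2).2 hlam2
        obtain ⟨u', -, hu'⟩ := (he'.2 n hne2').2 hlam2'
        simp only [List.get_eq_getElem] at hu hu'
        set kn := (e'[n]'hne2').1 with hkn
        have hentry_e : e[n]'hne2 = (kn, some u) := Prod.ext hfst hu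
        have hentry_e' : e'[n]'hne2' = (kn, some u') := Prod.ext hkn.symm hu'
        have htake' : e'.take (n + 1) = e'.take n ++ [(kn, some u')] := by
          rw [List.take_succ, List.getElem?_eq_getElem hne2', hentry_e']
          rfl
        have h5 : proj (e'.take (n + 1)) = proj (e'.take n) ++ [kn] := by
          rw [htake', proj_append]
          rfl
        have hexists : ∃ hh1 ∈ H (proj (e'.take n) ++ [kn]),
            (∀ t : S, (e'.take n ++ [(kn, some t)]) ∈ A → hh1 t = t) ∧ hh1 u = u' := by
          rcases eq_or_lt_of_le hdn with heq | hlt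
          · subst heq
            have hb_at : b[m.length]'(by omega) = (k, some s) := by
              rw [List.getElem_of_eq hbshape]
              exact List.getElem_concat_length rfl _
            have hb'_at : b'[m.length]'(by omega) = (k, some s') := by
              rw [List.getElem_of_eq hb'shape]
              exact List.getElem_concat_length rfl _
            have he_at : e[m.length]'hne2 = (k, some s) :=
              (hb.getElem (by omega)).symm.trans hb_at
            have he'_at : e'[m.length]'hne2' = (k, some s') :=
              (hb'.getElem (by omega)).symm.trans hb'_at
            have hus : u = s := by
              rw [he_at] at hu
              exact (Option.some_injective _ hu).symm
            have hu's' : u' = s' := by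
              rw [he'_at] at hu'
              exact (Option.some_injective _ hu').symm
            have hknk : kn = k := by rw [hkn, he'_at]
            have hprojb : proj b = proj m ++ [k] := by
              rw [hbshape, proj_append]
              rfl
            refine ⟨hh₀, ?_, ?_, ?_⟩
            · rwa [hmtake', hknk, ← hprojb]
            · intro t hta
              apply hh₀fix
              rwa [hmtake', hknk] at hta
            · rw [hus, hu's']
              exact hh₀s
          · have hnotA : e'.take n ∉ A := by
              intro hmemA
              have h1 : τ (e.take n) = e'.take n := by
                rw [treeAuto_take hτauto hclosed he n, hτe]
              have h2 : τ (e'.take n) = e'.take n := hτfix _ hmemA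
              have h3 : e.take n = e'.take n := τ.injective (h1.trans h2.symm)
              have := hmax n h3
              omega
            have hΓn : proj (e'.take n) ++ [kn] ∈ Γ := by
              rw [← h5]
              exact (NodeSet_take he' hclosed (n + 1)).1
            have hlamn : lam (proj (e'.take n) ++ [kn]) = true := by
              rw [← h5]; exact hlam2'
            obtain ⟨hh1, hmem1, hmap1⟩ := hHtrans _ hΓn hlamn u u'
            exact ⟨hh1, hmem1,
              fun t hta => absurd (hApre hta (List.prefix_append _ _)) hnotA, hmap1⟩
        obtain ⟨hh1, hmem1, hfix1, hmap1⟩ := hexists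
        refine ⟨substPerm (e'.take n) kn hh1 * g,
          mul_mem_AutM hHone hHmul (substPerm_mem_AutM _ _ _ hmem1 hHone hHinv) hg,
          ?_, ?_⟩
        · intro x hx
          show substPerm (e'.take n) kn hh1 (g x) = x
          rw [hgA x hx]
          exact substPerm_fix hApre hfix1 x hx
        · show substPerm (e'.take n) kn hh1 (g e) = _
          rw [hge, List.drop_eq_getElem_cons hne2, hentry_e]
          have hform : e'.take n ++ ((kn, some u) :: e.drop (n + 1))
              = e'.take n ++ [(kn, some u)] ++ e.drop (n + 1) := by simp
          rw [hform, substPerm_apply, substFun_of_prefix (List.prefix_append _ _) hh1,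
            drop_middle, hmap1, htake']
      · -- finite node case
        have hfalse : lam (proj (e.take (n + 1))) = false := by
          revert hlam2
          cases lam (proj (e.take (n + 1))) <;> simp
        have hE := (he.2 n hne2).1 hfalse
        have hE' := (he'.2 n hne2').1 (by rw [hproj_take]; exact hfalse)
        simp only [List.get_eq_getElem] at hE hE'
        have hentry : e[n]'hne2 = e'[n]'hne2' := Prod.ext hfst (hE.trans hE'.symm)
        refine ⟨g, hg, hgA, ?_⟩
        rw [hge, List.drop_eq_getElem_cons hne2, hentry]
        have h6 : e'.take (n + 1) = e'.take n ++ [e'[n]'hne2'] := by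
          rw [List.take_succ, List.getElem?_eq_getElem hne2']
          rfl
        rw [h6, List.append_assoc]
        rfl
  obtain ⟨g, hg, hgA, hge⟩ := key e.length (by omega) le_rfl
  refine ⟨g, hg, hgA, ?_⟩
  rw [hge, List.drop_length, List.append_nil, ← hlen, List.take_length]
end

section
/- In the NIC structure M constructed from a tree plan Γ with components modeling ℵ₀-categorical, algebraically trivial theories T_σ with |S₁(T_σ)| = 1, algebraic closure equals tree-closure: for every finite C ⊆ Γ(S), acl^M(C) = tcl(C). -/
open TreePlanDef List

namespace TreePlanDef

variable {S : Type*} {Γ : Finset (List ℕ)} {lam : List ℕ → Bool}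

-- proj basics
lemma proj_length (a : PreNode S) : (proj a).length = a.length := List.length_map _
lemma proj_take (a : PreNode S) (n : ℕ) : proj (a.take n) = (proj a).take n := List.map_take
lemma proj_dropLast (a : PreNode S) : proj a.dropLast = (proj a).dropLast := by
  rw [List.dropLast_eq_take, List.dropLast_eq_take, proj_take, proj_length]
lemma proj_getElem (a : PreNode S) (i : ℕ) (h : i < a.length) :
    (proj a)[i]'(by rwa [proj_length]) = a[i].1 := List.getElem_map _
lemma proj_eq_nil_iff (a : PreNode S) : proj a = [] ↔ a = [] := List.map_eq_nil_iff

lemma memGamma_of (a b : PreNode S) (hp : proj a = proj b)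
    (hn : a.map (fun e => e.2.isNone) = b.map (fun e => e.2.isNone))
    (ha : memGamma Γ lam Set.univ a) : memGamma Γ lam (Set.univ : Set S) b := by
  have hlen : b.length = a.length := by
    have := congrArg List.length hp; simpa [proj_length] using this.symm
  refine ⟨hp ▸ ha.1, ?_⟩
  intro k h
  have h' : k < a.length := hlen ▸ h
  have htake : proj (b.take (k+1)) = proj (a.take (k+1)) := by
    rw [proj_take, proj_take, hp]
  have hiff : (b.get ⟨k, h⟩).2 = none ↔ (a.get ⟨k, h'⟩).2 = none := by
    have h1 : (a.map (fun e => e.2.isNone))[k]'(by simpa using h') =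
        (b.map (fun e => e.2.isNone))[k]'(by simpa using h) := List.getElem_of_eq hn _
    rw [List.getElem_map, List.getElem_map] at h1
    simp only [List.get_eq_getElem]
    rw [← Option.isNone_iff_eq_none, ← Option.isNone_iff_eq_none, h1]
  obtain ⟨h1, h2⟩ := ha.2 k h'
  constructor
  · intro hf; rw [htake] at hf; exact hiff.mpr (h1 hf)
  · intro ht; rw [htake] at ht
    obtain ⟨x, -, hx⟩ := h2 ht
    have hbn : (b.get ⟨k, h⟩).2 ≠ none := by
      intro h0
      rw [hiff.mp h0] at hx; cases hx
    obtain ⟨x', hx'⟩ := Option.ne_none_iff_exists'.mp hbn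
    exact ⟨x', Set.mem_univ _, hx'⟩

lemma memGamma_middle (p r : PreNode S) (k : ℕ) (u u' : S)
    (h : memGamma Γ lam Set.univ (p ++ (k, some u) :: r)) :
    memGamma Γ lam (Set.univ : Set S) (p ++ (k, some u') :: r) := by
  refine memGamma_of _ _ ?_ ?_ h <;> simp [proj]

-- the twist permutation
lemma decomp_unique {p : PreNode S} {k : ℕ} {u u' : S} {r r' : PreNode S}
    (h : p ++ (k, some u) :: r = p ++ (k, some u') :: r') : u = u' ∧ r = r' := by
  have h2 := List.append_cancel_left h
  simp only [List.cons.injEq, Prod.mk.injEq, Option.some.injEq] at h2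
  exact ⟨h2.1.2, h2.2⟩

open Classical in
noncomputable def twist (p : PreNode S) (k : ℕ) (hh : S → S) (w : PreNode S) : PreNode S :=
  if h : ∃ u r, w = p ++ (k, some u) :: r then
    p ++ (k, some (hh h.choose)) :: h.choose_spec.choose
  else w

lemma twist_spec (p : PreNode S) (k : ℕ) (hh : S → S) (u : S) (r : PreNode S) :
    twist p k hh (p ++ (k, some u) :: r) = p ++ (k, some (hh u)) :: r := by
  have h : ∃ u' r', p ++ (k, some u) :: r = p ++ (k, some u') :: r' := ⟨u, r, rfl⟩
  rw [twist, dif_pos h]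
  obtain ⟨hu, hr⟩ := decomp_unique h.choose_spec.choose_spec.symm
  rw [hr, hu]

lemma twist_id (p : PreNode S) (k : ℕ) (hh : S → S) (w : PreNode S)
    (h : ¬ ∃ u r, w = p ++ (k, some u) :: r) : twist p k hh w = w := dif_neg h

lemma not_shape_self (p : PreNode S) (k : ℕ) : ¬ ∃ u r, p = p ++ (k, some u) :: r := by
  rintro ⟨u, r, h⟩
  have := congrArg List.length h
  simp at this

lemma not_shape_dropLast {p : PreNode S} {k : ℕ} {w : PreNode S}
    (h : ¬ ∃ u r, w = p ++ (k, some u) :: r) :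
    ¬ ∃ u r, w.dropLast = p ++ (k, some u) :: r := by
  rintro ⟨u, r, hw⟩
  apply h
  have hne : w ≠ [] := by
    intro h0; rw [h0] at hw; simp at hw
  refine ⟨u, r ++ [w.getLast hne], ?_⟩
  conv_lhs => rw [← List.dropLast_append_getLast hne]
  rw [hw]; simp

lemma twist_dropLast (p : PreNode S) (k : ℕ) (hh : S → S) (w : PreNode S) :
    twist p k hh w.dropLast = (twist p k hh w).dropLast := by
  by_cases h : ∃ u r, w = p ++ (k, some u) :: r
  · obtain ⟨u, r, rfl⟩ := h
    rcases eq_or_ne r [] with rfl | hr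
    · rw [twist_spec]
      have h1 : (p ++ (k, some u) :: ([] : PreNode S)).dropLast = p := List.dropLast_concat
      have h2 : (p ++ (k, some (hh u)) :: ([] : PreNode S)).dropLast = p := List.dropLast_concat
      rw [h1, h2, twist_id _ _ _ _ (not_shape_self p k)]
    · have hd : (p ++ (k, some u) :: r).dropLast = p ++ (k, some u) :: r.dropLast := by
        rw [List.dropLast_append_of_ne_nil (by simp), List.dropLast_cons_of_ne_nil hr]
      have hd' : (p ++ (k, some (hh u)) :: r).dropLast = p ++ (k, some (hh u)) :: r.dropLast := by
        rw [List.dropLast_append_of_ne_nil (by simp), List.dropLast_cons_of_ne_nil hr]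
      rw [hd, twist_spec, twist_spec, hd']
  · rw [twist_id _ _ _ _ h, twist_id _ _ _ _ (not_shape_dropLast h)]

lemma twist_proj (p : PreNode S) (k : ℕ) (hh : S → S) (w : PreNode S) :
    proj (twist p k hh w) = proj w := by
  by_cases h : ∃ u r, w = p ++ (k, some u) :: r
  · obtain ⟨u, r, rfl⟩ := h
    rw [twist_spec]; simp [proj]
  · rw [twist_id _ _ _ _ h]

noncomputable def twistEquiv (p : PreNode S) (k : ℕ) (hh : Equiv.Perm S) :
    Equiv.Perm (PreNode S) where
  toFun := twist p k hh
  invFun := twist p k hh.symm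
  left_inv w := by
    by_cases h : ∃ u r, w = p ++ (k, some u) :: r
    · obtain ⟨u, r, rfl⟩ := h
      rw [twist_spec, twist_spec, hh.symm_apply_apply]
    · rw [twist_id _ _ _ _ h, twist_id _ _ _ _ h]
  right_inv w := by
    by_cases h : ∃ u r, w = p ++ (k, some u) :: r
    · obtain ⟨u, r, rfl⟩ := h
      rw [twist_spec, twist_spec, hh.apply_symm_apply]
    · rw [twist_id _ _ _ _ h, twist_id _ _ _ _ h]

lemma twistEquiv_apply (p : PreNode S) (k : ℕ) (hh : Equiv.Perm S) (w : PreNode S) :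
    twistEquiv p k hh w = twist p k hh w := rfl

lemma twistEquiv_inv (p : PreNode S) (k : ℕ) (hh : Equiv.Perm S) :
    (twistEquiv p k hh)⁻¹ = twistEquiv p k hh⁻¹ := rfl

end TreePlanDef


namespace TreePlanDef

variable {S : Type*} {Γ : Finset (List ℕ)} {lam : List ℕ → Bool}

lemma nil_mem_NodeSet (hroot : ([] : List ℕ) ∈ Γ) : ([] : PreNode S) ∈ NodeSet Γ lam S :=
  ⟨by simpa [proj] using hroot, fun k h => absurd h (by simp)⟩

lemma dropLast_mem_NodeSet (hclosed : ∀ l ∈ Γ, l.dropLast ∈ Γ) {a : PreNode S}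
    (ha : a ∈ NodeSet Γ lam S) : a.dropLast ∈ NodeSet Γ lam S := by
  refine ⟨?_, ?_⟩
  · rw [proj_dropLast]; exact hclosed _ ha.1
  · intro k h
    have hlt : k < a.length := lt_of_lt_of_le h (by simp)
    have ht : a.dropLast.take (k+1) = a.take (k+1) := by
      rw [List.dropLast_eq_take, List.take_take]
      congr 1
      simp only [List.length_dropLast] at h
      omega
    have hg : a.dropLast.get ⟨k, h⟩ = a.get ⟨k, hlt⟩ := by
      simp only [List.get_eq_getElem]
      exact List.getElem_dropLast h
    rw [ht, hg]
    exact ha.2 k hlt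

lemma prefix_dropLast {a b : PreNode S} (hab : a <+: b) (hne : a ≠ b) : a <+: b.dropLast := by
  obtain ⟨d, rfl⟩ := hab
  rcases eq_or_ne d [] with rfl | hd
  · simp at hne
  · rw [List.dropLast_append_of_ne_nil hd]
    exact ⟨d.dropLast, rfl⟩

lemma prefix_mem_NodeSet (hclosed : ∀ l ∈ Γ, l.dropLast ∈ Γ) {b : PreNode S}
    (hb : b ∈ NodeSet Γ lam S) {a : PreNode S} (hab : a <+: b) : a ∈ NodeSet Γ lam S := by
  obtain ⟨n, hn⟩ : ∃ n, b.length ≤ n := ⟨b.length, le_refl _⟩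
  induction n generalizing b with
  | zero =>
    have hb0 : b = [] := List.length_eq_zero_iff.mp (Nat.le_zero.mp hn)
    subst hb0
    rw [List.prefix_nil.mp hab]
    exact hb
  | succ n ih =>
    rcases eq_or_ne a b with rfl | hne
    · exact hb
    · have hbne : b ≠ [] := by
        rintro rfl; exact hne (List.prefix_nil.mp hab)
      exact ih (dropLast_mem_NodeSet hclosed hb) (prefix_dropLast hab hne)
        (by simp only [List.length_dropLast]; omega)

lemma auto_fix_nil (hroot : ([] : List ℕ) ∈ Γ) {g : Equiv.Perm (PreNode S)}
    (hg : IsTreeAuto Γ lam g) : g [] = [] := by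
  have h := hg.2.2.1 [] (nil_mem_NodeSet hroot)
  exact (proj_eq_nil_iff _).mp (by simpa [proj] using h)

lemma auto_fix_prefix (hroot : ([] : List ℕ) ∈ Γ) (hclosed : ∀ l ∈ Γ, l.dropLast ∈ Γ)
    {g : Equiv.Perm (PreNode S)} (hg : IsTreeAuto Γ lam g) {b : PreNode S}
    (hb : b ∈ NodeSet Γ lam S) (hfix : g b = b) {a : PreNode S} (hab : a <+: b) : g a = a := by
  obtain ⟨n, hn⟩ : ∃ n, b.length ≤ n := ⟨b.length, le_refl _⟩
  induction n generalizing b with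
  | zero =>
    have hb0 : b = [] := List.length_eq_zero_iff.mp (Nat.le_zero.mp hn)
    subst hb0
    rw [List.prefix_nil.mp hab]
    exact auto_fix_nil hroot hg
  | succ n ih =>
    rcases eq_or_ne a b with rfl | hne
    · exact hfix
    · have hfix' : g b.dropLast = b.dropLast := by
        rw [hg.2.2.2 b hb, hfix]
      exact ih (dropLast_mem_NodeSet hclosed hb) hfix' (prefix_dropLast hab hne)
        (by simp only [List.length_dropLast]; omega)

lemma tclN_subset_NodeSet (hroot : ([] : List ℕ) ∈ Γ) (hclosed : ∀ l ∈ Γ, l.dropLast ∈ Γ)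
    {C : Set (PreNode S)} (hC : C ⊆ NodeSet Γ lam S) :
    ∀ n, tclN Γ lam (Set.univ : Set S) n C ⊆ NodeSet Γ lam S := by
  intro n
  induction n with
  | zero =>
    rintro x (rfl | ⟨c, hc, hx⟩)
    · exact nil_mem_NodeSet hroot
    · exact prefix_mem_NodeSet hclosed (hC hc) hx
  | succ n ih =>
    rintro x (hx | ⟨hx, -, -⟩)
    · exact ih hx
    · exact hx

lemma tclSet_subset_NodeSet (hroot : ([] : List ℕ) ∈ Γ) (hclosed : ∀ l ∈ Γ, l.dropLast ∈ Γ)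
    {C : Set (PreNode S)} (hC : C ⊆ NodeSet Γ lam S) :
    tclSet Γ lam (Set.univ : Set S) C ⊆ NodeSet Γ lam S := by
  intro x hx
  obtain ⟨n, hn⟩ := Set.mem_iUnion.mp hx
  exact tclN_subset_NodeSet hroot hclosed hC n hn

lemma tclSet_step {C : Set (PreNode S)} {x : PreNode S}
    (hx : memGamma Γ lam (Set.univ : Set S) x) (hlam : lam (proj x) = false)
    (hd : x.dropLast ∈ tclSet Γ lam (Set.univ : Set S) C) :
    x ∈ tclSet Γ lam (Set.univ : Set S) C := by
  obtain ⟨n, hn⟩ := Set.mem_iUnion.mp hd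
  exact Set.mem_iUnion.mpr ⟨n + 1, Or.inr ⟨hx, hlam, hn⟩⟩

lemma nil_mem_tclSet (C : Set (PreNode S)) :
    ([] : PreNode S) ∈ tclSet Γ lam (Set.univ : Set S) C :=
  Set.mem_iUnion.mpr ⟨0, Or.inl rfl⟩

lemma prefix_mem_tclSet {C : Set (PreNode S)} {c a : PreNode S} (hc : c ∈ C) (ha : a <+: c) :
    a ∈ tclSet Γ lam (Set.univ : Set S) C :=
  Set.mem_iUnion.mpr ⟨0, Or.inr ⟨c, hc, ha⟩⟩

end TreePlanDef


namespace TreePlanDef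

variable {S : Type*} {Γ : Finset (List ℕ)} {lam : List ℕ → Bool}

lemma twist_mem_NodeSet (p : PreNode S) (k : ℕ) (hh : S → S) {w : PreNode S}
    (hw : w ∈ NodeSet Γ lam S) : twist p k hh w ∈ NodeSet Γ lam S := by
  by_cases h : ∃ u r, w = p ++ (k, some u) :: r
  · obtain ⟨u, r, rfl⟩ := h
    rw [twist_spec]
    exact memGamma_middle p r k u (hh u) hw
  · rwa [twist_id _ _ _ _ h]

lemma fix_tclN (hroot : ([] : List ℕ) ∈ Γ) (hclosed : ∀ l ∈ Γ, l.dropLast ∈ Γ)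
    {C : Set (PreNode S)} (hC : C ⊆ NodeSet Γ lam S) {g : Equiv.Perm (PreNode S)}
    (hg : IsTreeAuto Γ lam g) (hgC : ∀ c ∈ C, g c = c) :
    ∀ n, ∀ x ∈ tclN Γ lam (Set.univ : Set S) n C, g x = x := by
  intro n
  induction n with
  | zero =>
    rintro x (rfl | ⟨c, hc, hx⟩)
    · exact auto_fix_nil hroot hg
    · exact auto_fix_prefix hroot hclosed hg (hC hc) (hgC c hc) hx
  | succ n ih =>
    rintro x (hx | ⟨hxN, hlam, hd⟩)
    · exact ih x hx
    · rcases eq_or_ne x [] with rfl | hne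
      · exact auto_fix_nil hroot hg
      · have hxN' : x ∈ NodeSet Γ lam S := hxN
        have hfix' : g x.dropLast = x.dropLast := ih _ hd
        have hgxN : g x ∈ NodeSet Γ lam S := hg.1 x hxN'
        have hproj : proj (g x) = proj x := hg.2.2.1 x hxN'
        have hdl : (g x).dropLast = x.dropLast := by
          rw [← hg.2.2.2 x hxN', hfix']
        have hlen : (g x).length = x.length := by
          have := congrArg List.length hproj
          simpa [proj_length] using this
        have hxlen : 0 < x.length := List.length_pos_iff.mpr hne
        apply List.ext_getElem hlen
        intro i h1 h2
        by_cases hi : i < x.length - 1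
        · have e1 : (g x)[i] = (g x).dropLast[i]'(by simp; omega) :=
            (List.getElem_dropLast _).symm
          have e2 : x.dropLast[i]'(by simp; omega) = x[i] := List.getElem_dropLast _
          rw [e1, ← e2]
          exact List.getElem_of_eq hdl _
        · have hieq : i = x.length - 1 := by omega
          have hfst : (g x)[i].1 = x[i].1 := by
            rw [← proj_getElem _ i (by omega), ← proj_getElem _ i h2]
            exact List.getElem_of_eq hproj _
          have htakex : x.take (i + 1) = x := by
            have hixl : i + 1 = x.length := by omega
            rw [hixl, List.take_length]
          have htakegx : (g x).take (i + 1) = g x := by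
            have hixl : i + 1 = (g x).length := by omega
            rw [hixl, List.take_length]
          have hsndx : x[i].2 = none := by
            have := (hxN.2 i h2).1
            rw [htakex] at this
            simpa using this hlam
          have hsndgx : (g x)[i].2 = none := by
            have := (hgxN.2 i h1).1
            rw [htakegx, hproj] at this
            simpa using this hlam
          exact Prod.ext hfst (hsndgx.trans hsndx.symm)

lemma twist_Compat {H : List ℕ → Set (Equiv.Perm S)} (hHone : ∀ σ, (1 : Equiv.Perm S) ∈ H σ)
    (p : PreNode S) (k : ℕ) (hh : Equiv.Perm S) (hhH : hh ∈ H (proj p ++ [k])) :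
    Compat Γ lam H (twistEquiv p k hh) := by
  intro b hb k' hk'Γ hk'lam F
  by_cases hcase : ∃ u r, b = p ++ (k, some u) :: r
  · obtain ⟨u, r, rfl⟩ := hcase
    refine ⟨1, hHone _, fun t ht => ?_⟩
    have e1 : (p ++ (k, some u) :: r) ++ [(k', some t)] =
        p ++ (k, some u) :: (r ++ [(k', some t)]) := by simp
    rw [twistEquiv_apply, twistEquiv_apply, e1, twist_spec, twist_spec]
    simp
  · by_cases hb2 : b = p ∧ k' = k
    · obtain ⟨hbp, hkk⟩ := hb2
      refine ⟨hh, by rw [hbp, hkk]; exact hhH, fun t ht => ?_⟩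
      rw [hbp, hkk, twistEquiv_apply, twistEquiv_apply,
        twist_id _ _ _ _ (not_shape_self p k)]
      exact twist_spec p k hh t []
    · refine ⟨1, hHone _, fun t ht => ?_⟩
      have h1 : ¬ ∃ u r, b ++ [(k', some t)] = p ++ (k, some u) :: r := by
        rintro ⟨u, r, hw⟩
        rcases eq_or_ne r [] with rfl | hr
        · have hlen : b.length = p.length := by
            have := congrArg List.length hw
            simp at this
            omega
          obtain ⟨hbp, hz⟩ := List.append_inj hw hlen
          simp only [List.cons.injEq, Prod.mk.injEq] at hz
          exact hb2 ⟨hbp, hz.1.1⟩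
        · apply hcase
          have hr2 : p ++ (k, some u) :: r =
              (p ++ (k, some u) :: r.dropLast) ++ [r.getLast hr] := by
            conv_rhs => rw [List.append_assoc, List.cons_append,
              List.dropLast_append_getLast hr]
          have hw2 := hw.trans hr2
          have hlen : b.length = (p ++ (k, some u) :: r.dropLast).length := by
            have := congrArg List.length hw2
            simp at this ⊢
            omega
          obtain ⟨hbp, -⟩ := List.append_inj hw2 hlen
          exact ⟨u, r.dropLast, hbp⟩
      rw [twistEquiv_apply, twistEquiv_apply, twist_id _ _ _ _ hcase, twist_id _ _ _ _ h1]
      simp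

lemma twistEquiv_mem_AutM {H : List ℕ → Set (Equiv.Perm S)}
    (hHone : ∀ σ, (1 : Equiv.Perm S) ∈ H σ) (hHinv : ∀ σ, ∀ h₁ ∈ H σ, h₁⁻¹ ∈ H σ)
    (p : PreNode S) (k : ℕ) (hh : Equiv.Perm S) (hhH : hh ∈ H (proj p ++ [k])) :
    twistEquiv p k hh ∈ AutM Γ lam H := by
  refine ⟨⟨?_, ?_, ?_, ?_⟩, twist_Compat hHone p k hh hhH, ?_⟩
  · intro a ha
    exact twist_mem_NodeSet p k hh ha
  · intro a ha
    rw [twistEquiv_inv]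
    exact twist_mem_NodeSet p k _ ha
  · intro a ha
    exact twist_proj p k hh a
  · intro a ha
    exact twist_dropLast p k hh a
  · rw [twistEquiv_inv]
    exact twist_Compat hHone p k hh⁻¹ (hHinv _ hh hhH)

end TreePlanDef

/-- in the NIC structure `M` constructed from the tree plan `Γ` with
components modeling ℵ₀-categorical, algebraically trivial theories `T_σ` with one 1-type
(represented via their automorphism groups `H σ` on `S`, so that `Aut(M) = AutM`),
algebraic closure equals tree-closure: for every finite `C ⊆ Γ(S)`, `acl^M(C) = tcl(C)`.
Here, as `M` is ℵ₀-categorical, `x ∈ acl^M(C)` iff the orbit of `x` under `Aut(M/C)` is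
finite. -/
theorem construction_acl_eq_tcl
    {S : Type*} [Countable S] [Infinite S]
    (Γ : Finset (List ℕ)) (lam : List ℕ → Bool)
    (hroot : ([] : List ℕ) ∈ Γ) (hclosed : ∀ l ∈ Γ, l.dropLast ∈ Γ)
    (hlamroot : lam [] = false)
    -- the component automorphism groups `H σ = Aut(N_σ)` (transported to `S` via `f_σ`)
    (H : List ℕ → Set (Equiv.Perm S))
    (hHone : ∀ σ, (1 : Equiv.Perm S) ∈ H σ)
    (hHmul : ∀ σ, ∀ h₁ ∈ H σ, ∀ h₂ ∈ H σ, h₁ * h₂ ∈ H σ)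
    (hHinv : ∀ σ, ∀ h₁ ∈ H σ, h₁⁻¹ ∈ H σ)
    -- `T_σ` is ℵ₀-categorical: `H σ` is oligomorphic
    (hHcat : ∀ σ ∈ Γ, lam σ = true → ∀ n : ℕ,
      {O : Set (Fin n → S) | ∃ s : Fin n → S,
        O = {t | ∃ hh ∈ H σ, ∀ i, hh (s i) = t i}}.Finite)
    -- `|S₁(T_σ)| = 1`: `H σ` is transitive
    (hHtrans : ∀ σ ∈ Γ, lam σ = true → ∀ s t : S, ∃ hh ∈ H σ, hh s = t)
    -- `T_σ` is algebraically trivial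
    (hHtriv : ∀ σ ∈ Γ, lam σ = true → ∀ B : Finset S, ∀ s : S, s ∉ B →
      {t : S | ∃ hh ∈ H σ, (∀ x ∈ B, hh x = x) ∧ hh s = t}.Infinite)
     :
    ∀ C : Set (PreNode S), C.Finite → C ⊆ NodeSet Γ lam S →
      {x ∈ NodeSet Γ lam S |
        {y : PreNode S | ∃ g ∈ AutM Γ lam H, (∀ c ∈ C, g c = c) ∧ g x = y}.Finite} =
      tclSet Γ lam (Set.univ : Set S) C := by
  classical
  intro C hCfin hC
  ext x
  simp only [Set.mem_setOf_eq]
  constructor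
  · rintro ⟨hxN, hfin⟩
    by_contra hxt
    have hPx : x.take x.length ∉ tclSet Γ lam (Set.univ : Set S) C := by
      rwa [List.take_length]
    have hex : ∃ m, x.take m ∉ tclSet Γ lam (Set.univ : Set S) C := ⟨x.length, hPx⟩
    set m := Nat.find hex with hmdef
    have hm : x.take m ∉ tclSet Γ lam (Set.univ : Set S) C := Nat.find_spec hex
    have hmle : m ≤ x.length := Nat.find_le hPx
    have hm0 : m ≠ 0 := by
      intro h0
      apply hm
      rw [h0]
      simpa using nil_mem_tclSet (Γ := Γ) (lam := lam) C
    have hdropT : x.take (m - 1) ∈ tclSet Γ lam (Set.univ : Set S) C := by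
      by_contra hcon
      exact Nat.find_min hex (show m - 1 < m by omega) hcon
    set a := x.take m with hadef
    have ha_pre : a <+: x := List.take_prefix m x
    have haN : a ∈ NodeSet Γ lam S := prefix_mem_NodeSet hclosed hxN ha_pre
    have hma : a.length = m := by rw [hadef, List.length_take]; omega
    have hane : a ≠ [] := by
      intro h0; rw [h0] at hma; simp at hma; omega
    have hdropa : a.dropLast = x.take (m - 1) := by
      rw [hadef, List.dropLast_eq_take, List.take_take, List.length_take]
      congr 1; omega
    have hlamA : lam (proj a) = true := by
      cases hb : lam (proj a)
      · exact absurd (tclSet_step haN hb (hdropa ▸ hdropT)) hm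
      · rfl
    have him : m - 1 < a.length := by omega
    have htakea : a.take (m - 1 + 1) = a := by
      have h1 : m - 1 + 1 = a.length := by omega
      rw [h1, List.take_length]
    obtain ⟨s, -, hs⟩ := (haN.2 (m - 1) him).2 (by rw [htakea]; exact hlamA)
    set k := (a.get ⟨m - 1, him⟩).1 with hkdef
    set pa := a.dropLast with hpadef
    have hadecomp : a = pa ++ [(k, some s)] := by
      have h1 : a = a.dropLast ++ [a.getLast hane] := (List.dropLast_append_getLast hane).symm
      have h2 : a.getLast hane = a.get ⟨m - 1, him⟩ := by
        rw [List.getLast_eq_getElem, List.get_eq_getElem]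
        congr 1
        simp only [Fin.val_mk]
        omega
      have h3 : a.get ⟨m - 1, him⟩ = (k, some s) := Prod.ext rfl hs
      rw [h1, h2, h3]
    have hprojdecomp : proj a = proj pa ++ [k] := by
      conv_lhs => rw [hadecomp]
      simp [proj]
    have hσΓ : proj pa ++ [k] ∈ Γ := hprojdecomp ▸ haN.1
    have hσlam : lam (proj pa ++ [k]) = true := hprojdecomp ▸ hlamA
    set B : Set S := {u | ∃ c ∈ C, pa ++ [(k, some u)] <+: c} with hBdef
    have hBfin : B.Finite := by
      have hsub : B ⊆ ⋃ c ∈ C, {u | pa ++ [(k, some u)] <+: c} := by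
        rintro u ⟨c, hc, hpre⟩
        exact Set.mem_biUnion hc hpre
      refine Set.Finite.subset (Set.Finite.biUnion hCfin fun c hc => ?_) hsub
      apply Set.Subsingleton.finite
      intro u hu u' hu'
      simp only [Set.mem_setOf_eq] at hu hu'
      have e1 := List.prefix_iff_eq_take.mp hu
      have e2 := List.prefix_iff_eq_take.mp hu'
      have e3 : pa ++ [(k, some u)] = pa ++ [(k, some u')] := by
        rw [e1, e2]
        congr 1
        simp
      have e4 := List.append_cancel_left e3
      simpa using e4
    set Bf := hBfin.toFinset with hBfdef
    have hsB : s ∉ Bf := by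
      intro hmem
      rw [Set.Finite.mem_toFinset] at hmem
      obtain ⟨c, hc, hpre⟩ := hmem
      rw [← hadecomp] at hpre
      exact hm (prefix_mem_tclSet hc hpre)
    have hT := hHtriv _ hσΓ hσlam Bf s hsB
    have hxdecomp : x = pa ++ (k, some s) :: x.drop m := by
      conv_lhs => rw [← List.take_append_drop m x, ← hadef]
      rw [hadecomp]
      simp
    have hinj : Set.InjOn (fun t => pa ++ (k, some t) :: x.drop m)
        {t : S | ∃ hh ∈ H (proj pa ++ [k]), (∀ y ∈ Bf, hh y = y) ∧ hh s = t} := by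
      intro t1 _ t2 _ h
      have := List.append_cancel_left h
      simpa using this
    have himg : (fun t => pa ++ (k, some t) :: x.drop m) ''
        {t : S | ∃ hh ∈ H (proj pa ++ [k]), (∀ y ∈ Bf, hh y = y) ∧ hh s = t} ⊆
        {y : PreNode S | ∃ g ∈ AutM Γ lam H, (∀ c ∈ C, g c = c) ∧ g x = y} := by
      rintro y ⟨t, ht, rfl⟩
      obtain ⟨hh, hhH, hfixB, hhs⟩ := ht
      refine ⟨twistEquiv pa k hh, twistEquiv_mem_AutM hHone hHinv pa k hh hhH, ?_, ?_⟩
      · intro c hc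
        rw [twistEquiv_apply]
        by_cases hcs : ∃ u r, c = pa ++ (k, some u) :: r
        · obtain ⟨u, r, rfl⟩ := hcs
          have huB : u ∈ Bf := by
            rw [Set.Finite.mem_toFinset]
            exact ⟨_, hc, ⟨r, by simp⟩⟩
          rw [twist_spec, hfixB u huB]
        · rw [twist_id _ _ _ _ hcs]
      · rw [twistEquiv_apply]
        conv_lhs => rw [hxdecomp]
        rw [twist_spec, hhs]
    exact ((hT.image hinj).mono himg) hfin
  · intro hx
    obtain ⟨n, hn⟩ := Set.mem_iUnion.mp hx
    refine ⟨tclN_subset_NodeSet hroot hclosed hC n hn, ?_⟩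
    apply Set.Finite.subset (Set.finite_singleton x)
    rintro y ⟨g, hgA, hgfix, rfl⟩
    have := fix_tclN hroot hclosed hC hgA.1 hgfix n x hn
    simp [this]
end
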